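/- Let m ≥ 1 be an integer, α > 0, ρ ∈ ℝ, n ≥ 1, and let K_n be the Laguerre-Gaussian kernel on ℝⁿ with parameters m, α, ρ. Then e^{−nρ}·∫_{ℝⁿ} K_n(x)² dx = [e^{nρ}·α^n·(mπ/2)^{n/2} / binom(m−1+n/2, m−1)²] · Σ_{k=0}^{m−1} Σ_{j=0}^{m−1} binom(m−1+n/2, m−1−k)·binom(m−1+n/2, m−1−j)·((−1)^{k+j}/(k!·j!))·Γ(n/2+k+j)/(2^{k+j}·Γ(n/2)), where binom(m−1+n/2, m−1−k) = Γ(m+n/2)/(Γ(n/2+k+1)·(m−1−k)!). -/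

import Mathlib

open MeasureTheory Filter Real
open scoped ENNReal Topology

/-- The generalized Laguerre polynomial
`L_m^β(r) = Σ_{k=0}^m [Γ(m+β+1)/(Γ(β+k+1)·(m−k)!)]·(−r)^k/k!`. -/
noncomputable def laguerreL (m : ℕ) (β : ℝ) (r : ℝ) : ℝ :=
  ∑ k ∈ Finset.range (m + 1),
    (Real.Gamma ((m : ℝ) + β + 1) / (Real.Gamma (β + (k : ℝ) + 1) * (Nat.factorial (m - k)))) *
      ((-r) ^ k / (Nat.factorial k))

/-- The Laguerre-Gaussian kernel on `ℝⁿ` with parameters `m ≥ 1`, `α > 0`, `ρ ∈ ℝ`: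
`K_n(x) = (e^{nρ}/binom(m−1+n/2, m−1))·L_{m−1}^{n/2}(|x/α|²/m)·e^{−|x/α|²/m}`, where
`binom(m−1+n/2, m−1) = Γ(m+n/2)/(Γ(n/2+1)·(m−1)!)`. -/
noncomputable def lagGaussKernel (m : ℕ) (α ρ : ℝ) (n : ℕ)
    (x : EuclideanSpace ℝ (Fin n)) : ℝ :=
  (Real.exp (n * ρ) /
      (Real.Gamma ((m : ℝ) + (n : ℝ) / 2) /
        (Real.Gamma ((n : ℝ) / 2 + 1) * (Nat.factorial (m - 1))))) *
    laguerreL (m - 1) ((n : ℝ) / 2) (‖x‖ ^ 2 / (α ^ 2 * m)) *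
    Real.exp (-(‖x‖ ^ 2 / (α ^ 2 * m)))

lemma polar_integral (n : ℕ) (hn : 1 ≤ n) (f : ℝ → ℝ) :
    ∫ x : EuclideanSpace ℝ (Fin n), f ‖x‖ =
      ((n : ℝ) * (Real.sqrt π ^ n / Real.Gamma ((n : ℝ) / 2 + 1))) *
        ∫ y in Set.Ioi (0 : ℝ), y ^ (n - 1) * f y := by
  haveI : Nontrivial (EuclideanSpace ℝ (Fin n)) := by
    have : 0 < Module.finrank ℝ (EuclideanSpace ℝ (Fin n)) := by
      rw [finrank_euclideanSpace]; simpa using (show 0 < n by omega)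
    exact Module.nontrivial_of_finrank_pos this
  rw [MeasureTheory.integral_fun_norm_addHaar volume f]
  have hdim : Module.finrank ℝ (EuclideanSpace ℝ (Fin n)) = n := by
    simp [finrank_euclideanSpace]
  rw [hdim]
  have hball : (volume (Metric.ball (0 : EuclideanSpace ℝ (Fin n)) 1)).toReal =
      Real.sqrt π ^ n / Real.Gamma ((n : ℝ) / 2 + 1) := by
    haveI : Nonempty (Fin n) := Fin.pos_iff_nonempty.mp (by omega)
    rw [EuclideanSpace.volume_ball]
    simp [ENNReal.toReal_ofReal, div_nonneg, (Real.Gamma_pos_of_pos (by positivity : (0:ℝ) < (n:ℝ)/2 + 1)).le,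
      pow_nonneg (Real.sqrt_nonneg _)]
  rw [nsmul_eq_mul, measureReal_def, hball, smul_eq_mul]
  simp_rw [smul_eq_mul]
  ring

lemma radial_moment (n : ℕ) (hn : 1 ≤ n) (s : ℕ) {b : ℝ} (hb : 0 < b) :
    ∫ y in Set.Ioi (0 : ℝ), y ^ (n - 1 + 2 * s) * Real.exp (-b * y ^ 2) =
      b ^ (-((n : ℝ) / 2 + s)) * (1 / 2) * Real.Gamma ((n : ℝ) / 2 + s) := by
  have hq : (-1 : ℝ) < ((n - 1 + 2 * s : ℕ) : ℝ) := by
    have : 1 ≤ n - 1 + 2 * s + 1 := by omega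
    have := Nat.one_le_cast (α := ℝ) |>.mpr this
    push_cast at this ⊢
    linarith
  have := integral_rpow_mul_exp_neg_mul_rpow (p := 2) (q := ((n - 1 + 2 * s : ℕ) : ℝ))
    two_pos hq hb
  have hcast : (((n - 1 + 2 * s : ℕ) : ℝ) + 1) = (n : ℝ) + 2 * s := by
    push_cast [Nat.cast_sub hn]; ring
  rw [show ∫ y in Set.Ioi (0 : ℝ), y ^ (n - 1 + 2 * s) * Real.exp (-b * y ^ 2) =
      ∫ y in Set.Ioi (0 : ℝ), y ^ (((n - 1 + 2 * s : ℕ) : ℝ)) * Real.exp (-b * y ^ (2 : ℝ)) from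
    setIntegral_congr_fun measurableSet_Ioi fun y hy => by
      rw [Real.rpow_natCast, Real.rpow_two], this]
  rw [hcast]
  rw [show (-((n : ℝ) + 2 * s) / 2) = -((n : ℝ) / 2 + s) by ring,
    show (((n : ℝ) + 2 * s) / 2) = (n : ℝ) / 2 + s by ring]


/-- Explicit computation of `e^{−nρ}·∫ K_n²` for the Laguerre-Gaussian
kernel. -/
theorem laguerre_gaussian_global_repulsion (m : ℕ) (hm : 1 ≤ m) (α ρ : ℝ) (hα : 0 < α)
    (n : ℕ) (hn : 1 ≤ n) :
    Real.exp (-(n * ρ)) * ∫ x : EuclideanSpace ℝ (Fin n), (lagGaussKernel m α ρ n x) ^ 2 =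
      (Real.exp (n * ρ) * α ^ n * ((m : ℝ) * π / 2) ^ ((n : ℝ) / 2) /
          (Real.Gamma ((m : ℝ) + (n : ℝ) / 2) /
            (Real.Gamma ((n : ℝ) / 2 + 1) * (Nat.factorial (m - 1)))) ^ 2) *
        ∑ k ∈ Finset.range m, ∑ j ∈ Finset.range m,
          (Real.Gamma ((m : ℝ) + (n : ℝ) / 2) /
              (Real.Gamma ((n : ℝ) / 2 + (k : ℝ) + 1) * (Nat.factorial (m - 1 - k)))) *
            (Real.Gamma ((m : ℝ) + (n : ℝ) / 2) /
              (Real.Gamma ((n : ℝ) / 2 + (j : ℝ) + 1) * (Nat.factorial (m - 1 - j)))) *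
            ((-1 : ℝ) ^ (k + j) / (Nat.factorial k * Nat.factorial j)) *
            (Real.Gamma ((n : ℝ) / 2 + (k : ℝ) + (j : ℝ)) /
              (2 ^ (k + j) * Real.Gamma ((n : ℝ) / 2))) := by
  set β : ℝ := (n : ℝ) / 2 with hβdef
  have hβpos : 0 < β := by positivity
  set B : ℝ := Real.Gamma ((m : ℝ) + β) / (Real.Gamma (β + 1) * (Nat.factorial (m - 1))) with hBdef
  set E : ℝ := Real.exp ((n : ℝ) * ρ) with hEdef
  set a : ℝ := α ^ 2 * m with hadef
  have hapos : 0 < a := by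
    have : (0:ℝ) < m := by exact_mod_cast hm
    positivity
  set b : ℝ := 2 / a with hbdef
  have hbpos : 0 < b := by positivity
  set c : ℕ → ℝ := fun k =>
    Real.Gamma ((m : ℝ) + β) / (Real.Gamma (β + (k : ℝ) + 1) * (Nat.factorial (m - 1 - k)))
    with hcdef
  have hM : ((m - 1 : ℕ) : ℝ) + β + 1 = (m : ℝ) + β := by
    push_cast [Nat.cast_sub hm]; ring
  -- the Laguerre polynomial as a sum over range m
  have hL : ∀ r : ℝ, laguerreL (m - 1) β r =
      ∑ k ∈ Finset.range m, c k * ((-r) ^ k / (Nat.factorial k)) := by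
    intro r
    rw [laguerreL, Nat.sub_add_cancel hm]
    refine Finset.sum_congr rfl fun k hk => ?_
    rw [hM]
  set A : ℕ → ℕ → ℝ := fun k j =>
    (E / B) ^ 2 * c k * c j *
      ((-1 : ℝ) ^ (k + j) / ((Nat.factorial k : ℝ) * (Nat.factorial j) * a ^ (k + j)))
    with hAdef
  -- Step 1: radialize
  have step1 : ∫ x : EuclideanSpace ℝ (Fin n), (lagGaussKernel m α ρ n x) ^ 2 =
      ((n : ℝ) * (Real.sqrt π ^ n / Real.Gamma (β + 1))) *
        ∫ y in Set.Ioi (0 : ℝ), y ^ (n - 1) *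
          ((E / B) * laguerreL (m - 1) β (y ^ 2 / a) * Real.exp (-(y ^ 2 / a))) ^ 2 := by
    rw [← polar_integral n hn (fun y =>
      ((E / B) * laguerreL (m - 1) β (y ^ 2 / a) * Real.exp (-(y ^ 2 / a))) ^ 2)]
    rfl
  -- Step 2: pointwise expansion
  have step2 : ∀ y : ℝ, y ^ (n - 1) *
      ((E / B) * laguerreL (m - 1) β (y ^ 2 / a) * Real.exp (-(y ^ 2 / a))) ^ 2 =
      ∑ k ∈ Finset.range m, ∑ j ∈ Finset.range m,
        A k j * (y ^ (n - 1 + 2 * (k + j)) * Real.exp (-b * y ^ 2)) := by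
    intro y
    have hexp : Real.exp (-(y ^ 2 / a)) ^ 2 = Real.exp (-b * y ^ 2) := by
      rw [sq, ← Real.exp_add]
      congr 1
      rw [hbdef]
      ring
    rw [hL, mul_pow, mul_pow, hexp, pow_two (∑ k ∈ Finset.range m, c k * ((-(y ^ 2 / a)) ^ k / (Nat.factorial k : ℝ))), Finset.sum_mul_sum]
    simp only [Finset.mul_sum, Finset.sum_mul]
    refine Finset.sum_congr rfl fun k hk => ?_
    refine Finset.sum_congr rfl fun j hj => ?_
    simp only [hAdef]
    have hy2 : (-(y ^ 2 / a)) ^ k = (-1 : ℝ) ^ k * y ^ (2 * k) / a ^ k := by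
      rw [neg_pow, div_pow, ← pow_mul]
      ring
    have hy2' : (-(y ^ 2 / a)) ^ j = (-1 : ℝ) ^ j * y ^ (2 * j) / a ^ j := by
      rw [neg_pow, div_pow, ← pow_mul]
      ring
    rw [hy2, hy2']
    have hpow : y ^ (n - 1 + 2 * (k + j)) = y ^ (n - 1) * y ^ (2 * k) * y ^ (2 * j) := by
      rw [← pow_add, ← pow_add]; ring_nf
    rw [hpow]
    have h1 : (Nat.factorial k : ℝ) ≠ 0 := by exact_mod_cast (Nat.factorial_pos k).ne'
    have h2 : (Nat.factorial j : ℝ) ≠ 0 := by exact_mod_cast (Nat.factorial_pos j).ne'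
    field_simp
    ring
  -- Step 3: integrate term by term
  have hint : ∀ s : ℕ, IntegrableOn
      (fun y : ℝ => y ^ (n - 1 + 2 * s) * Real.exp (-b * y ^ 2)) (Set.Ioi 0) := by
    intro s
    have h := integrableOn_rpow_mul_exp_neg_mul_sq hbpos
      (s := ((n - 1 + 2 * s : ℕ) : ℝ))
      (lt_of_lt_of_le neg_one_lt_zero (Nat.cast_nonneg _))
    refine h.congr_fun (fun y hy => ?_) measurableSet_Ioi
    dsimp only
    rw [Real.rpow_natCast]
  have step3 : ∫ y in Set.Ioi (0 : ℝ), y ^ (n - 1) *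
      ((E / B) * laguerreL (m - 1) β (y ^ 2 / a) * Real.exp (-(y ^ 2 / a))) ^ 2 =
      ∑ k ∈ Finset.range m, ∑ j ∈ Finset.range m,
        A k j * (b ^ (-(β + ((k + j : ℕ) : ℝ))) * (1 / 2) * Real.Gamma (β + ((k + j : ℕ) : ℝ))) := by
    rw [setIntegral_congr_fun measurableSet_Ioi (fun y _ => step2 y)]
    rw [integral_finset_sum _ fun k _ => integrable_finset_sum _ fun j _ =>
      ((hint (k + j)).const_mul _)]
    refine Finset.sum_congr rfl fun k hk => ?_
    rw [integral_finset_sum _ fun j _ => ((hint (k + j)).const_mul _)]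
    refine Finset.sum_congr rfl fun j hj => ?_
    rw [MeasureTheory.integral_const_mul, radial_moment n hn (k + j) hbpos]
  rw [step1, step3]
  -- Step 4: algebra
  have hBpos : 0 < B := by
    have h1 : 0 < Real.Gamma ((m : ℝ) + β) :=
      Real.Gamma_pos_of_pos (by positivity)
    have h2 : 0 < Real.Gamma (β + 1) := Real.Gamma_pos_of_pos (by positivity)
    have h3 : 0 < (Nat.factorial (m - 1) : ℝ) := by exact_mod_cast Nat.factorial_pos _
    rw [hBdef]; positivity
  have hΓβ : 0 < Real.Gamma β := Real.Gamma_pos_of_pos hβpos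
  have hΓβ1 : Real.Gamma (β + 1) = β * Real.Gamma β := Real.Gamma_add_one hβpos.ne'
  have hππ : Real.sqrt π ^ n * b ^ (-β) = α ^ n * ((m : ℝ) * π / 2) ^ β := by
    have h1 : Real.sqrt π ^ n = π ^ β := by
      rw [Real.sqrt_eq_rpow, ← Real.rpow_natCast (π ^ ((1:ℝ)/2)) n, ← Real.rpow_mul pi_pos.le]
      congr 1
      rw [hβdef]; ring
    have h2 : b ^ (-β) = (a / 2) ^ β := by
      rw [Real.rpow_neg hbpos.le, ← Real.inv_rpow hbpos.le]
      congr 1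
      rw [hbdef]
      field_simp
    have h3 : (α ^ 2) ^ β = α ^ n := by
      rw [show ((α ^ 2 : ℝ)) = α ^ ((2 : ℕ) : ℝ) from (Real.rpow_natCast α 2).symm,
        ← Real.rpow_mul hα.le,
        show ((2 : ℕ) : ℝ) * β = ((n : ℕ) : ℝ) by rw [hβdef]; push_cast; ring,
        Real.rpow_natCast]
    rw [h1, h2, ← h3, ← Real.mul_rpow pi_pos.le (by positivity), ← Real.mul_rpow (by positivity) (by positivity)]
    congr 1
    rw [hadef]
    ring
  simp_rw [Finset.mul_sum]
  refine Finset.sum_congr rfl fun k hk => Finset.sum_congr rfl fun j hj => ?_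
  simp only [hAdef, hcdef]
  have hΓarg : β + ((k + j : ℕ) : ℝ) = β + (k : ℝ) + (j : ℝ) := by push_cast; ring
  have hbsplit : b ^ (-(β + (k : ℝ) + (j : ℝ))) = b ^ (-β) * (a ^ (k + j) / 2 ^ (k + j)) := by
    rw [show (-(β + (k : ℝ) + (j : ℝ))) = (-β) + (-((k + j : ℕ) : ℝ)) by push_cast; ring,
      Real.rpow_add hbpos, Real.rpow_neg hbpos.le ((k + j : ℕ) : ℝ), Real.rpow_natCast]
    congr 1
    rw [hbdef, div_pow, inv_div]
  have hP : (0 : ℝ) < Real.sqrt π ^ n := by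
    have := Real.sqrt_pos.mpr pi_pos
    positivity
  have hQ : b ^ (-β) = α ^ n * ((m : ℝ) * π / 2) ^ β / Real.sqrt π ^ n := by
    rw [eq_div_iff hP.ne', mul_comm]
    exact hππ
  have hF : Real.exp (-((n : ℝ) * ρ)) = E⁻¹ := by
    rw [hEdef, Real.exp_neg]
  rw [hΓarg]
  rw [hbsplit]
  rw [hQ]
  rw [hΓβ1]
  rw [hF]
  rw [show ((n : ℝ)) = 2 * β by rw [hβdef]; ring]
  have hE0 : E ≠ 0 := by rw [hEdef]; exact Real.exp_ne_zero _
  have hfk : (Nat.factorial k : ℝ) ≠ 0 := by exact_mod_cast (Nat.factorial_pos k).ne'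
  have hfj : (Nat.factorial j : ℝ) ≠ 0 := by exact_mod_cast (Nat.factorial_pos j).ne'
  have hfmk : (Nat.factorial (m - 1 - k) : ℝ) ≠ 0 := by exact_mod_cast (Nat.factorial_pos _).ne'
  have hfmj : (Nat.factorial (m - 1 - j) : ℝ) ≠ 0 := by exact_mod_cast (Nat.factorial_pos _).ne'
  have hΓk : Real.Gamma (β + (k : ℝ) + 1) ≠ 0 :=
    (Real.Gamma_pos_of_pos (by positivity)).ne'
  have hΓj : Real.Gamma (β + (j : ℝ) + 1) ≠ 0 :=
    (Real.Gamma_pos_of_pos (by positivity)).ne'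
  have hB0 : B ≠ 0 := hBpos.ne'
  have ha0 : a ≠ 0 := hapos.ne'
  field_simp
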